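/- arXiv:2602.12462 — 2 statements merged into one kernel-verified Lean document; each statement's English description precedes it below -/
import Mathlib

section
/- Let G be a profinite group and let f ∈ F̂₂ have image x^r y^s (r, s ∈ Ẑ) in the abelianization of F̂₂. (i) If a, b, A, B ∈ G are such that a and b each commute with both A and B, then f(a,b) f(A,B) = f(aA, bB). (ii) If a, b, g ∈ G and g commutes with both a and b, then f(a, gb) = f(a,b) g^s. (iii) If a, b, g ∈ G, g commutes with a, and g b = b g^{-1}, then f(a, gb) = f(a,b) g^e, where e = 0 if s ∈ 2Ẑ and e = −1 otherwise. -/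
/-! # Common setup: profinite groups, Ẑ, free profinite F₂, profinite completions,
the Grothendieck–Teichmüller group, braid groups and mapping class groups. -/

universe u

/-- A (topological) group is profinite if it is a compact, Hausdorff, totally
disconnected topological group. -/
class IsProfiniteGroup (G : Type) [Group G] [TopologicalSpace G] extends
    IsTopologicalGroup G, CompactSpace G, T2Space G, TotallyDisconnectedSpace G : Prop

/-- A model of Ẑ, the profinite completion of ℤ: a profinite commutative topological
ring whose underlying additive profinite group is the free profinite group on the
single (topological) generator `1`. These properties characterize Ẑ uniquely. -/
structure ZhatModel : Type 1 where
  R : Type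
  [commRing : CommRing R]
  [top : TopologicalSpace R]
  [topRing : IsTopologicalRing R]
  [cpt : CompactSpace R]
  [t2 : T2Space R]
  [td : TotallyDisconnectedSpace R]
  free : ∀ (G : Type) [Group G] [TopologicalSpace G] [IsProfiniteGroup G] (a : G),
    ∃! φ : ContinuousMonoidHom (Multiplicative R) G,
      φ (Multiplicative.ofAdd (1 : R)) = a

attribute [instance] ZhatModel.commRing ZhatModel.top ZhatModel.topRing
  ZhatModel.cpt ZhatModel.t2 ZhatModel.td

/-- `Z.pow a l` is the profinite power `a ^ l` for `l ∈ Ẑ`: the image of `l` under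
the unique continuous homomorphism `Ẑ → G` sending `1` to `a`. -/
noncomputable def ZhatModel.pow (Z : ZhatModel) {G : Type} [Group G] [TopologicalSpace G]
    [IsProfiniteGroup G] (a : G) (l : Z.R) : G :=
  (Z.free G a).exists.choose (Multiplicative.ofAdd l)

/-- A model of the free profinite group `F̂₂` on two generators `x`, `y`. -/
structure F2Model : Type 1 where
  F : Type
  [grp : Group F]
  [top : TopologicalSpace F]
  [pro : IsProfiniteGroup F]
  x : F
  y : F
  free : ∀ (G : Type) [Group G] [TopologicalSpace G] [IsProfiniteGroup G] (a b : G),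
    ∃! φ : ContinuousMonoidHom F G, φ x = a ∧ φ y = b

attribute [instance] F2Model.grp F2Model.top F2Model.pro

/-- `F2.eval f a b` is `f(a,b)`: the image of `f ∈ F̂₂` under the unique continuous
homomorphism `F̂₂ → G` with `x ↦ a`, `y ↦ b`. -/
noncomputable def F2Model.eval (F2 : F2Model) {G : Type} [Group G] [TopologicalSpace G]
    [IsProfiniteGroup G] (f : F2.F) (a b : G) : G :=
  (F2.free G a b).exists.choose f

/-- A model of the profinite completion of a (discrete) group `B`: a profinite group
`C` together with a homomorphism `ι : B → C` such that every homomorphism from `B`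
to a profinite group extends uniquely to a continuous homomorphism on `C`.  This
universal property characterizes the profinite completion uniquely. -/
structure ProfiniteCompletionModel (B : Type) [Group B] : Type 1 where
  C : Type
  [grp : Group C]
  [top : TopologicalSpace C]
  [pro : IsProfiniteGroup C]
  ι : B →* C
  free : ∀ (H : Type) [Group H] [TopologicalSpace H] [IsProfiniteGroup H] (ψ : B →* H),
    ∃! φ : ContinuousMonoidHom C H, ∀ b, φ (ι b) = ψ b

attribute [instance] ProfiniteCompletionModel.grp ProfiniteCompletionModel.top
  ProfiniteCompletionModel.pro

/-! ## Generic words in a group -/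

section Words

variable {G : Type*} [Group G]

/-- `genY b k = b (k-1) ⋯ b 2 (b 1)² b 2 ⋯ b (k-1)` (equal to `1` for `k ≤ 1`). -/
def genY (b : ℕ → G) : ℕ → G
  | 0 => 1
  | 1 => 1
  | 2 => b 1 * b 1
  | (k+3) => b (k+2) * genY b (k+2) * b (k+2)

/-- `genProd b k = b 1 * b 2 * ⋯ * b k`. -/
def genProd (b : ℕ → G) : ℕ → G
  | 0 => 1
  | (k+1) => genProd b k * b (k+1)

/-- `genW b k = (b 1 ⋯ b (k-1))^k`. -/
def genW (b : ℕ → G) (k : ℕ) : G := (genProd b (k-1))^k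

end Words

/-! ## Braid groups -/

/-- Braid relations on `n` generators (indexed by `Fin n`, where index `i`
stands for `σ_{i+1}`). -/
def braidRels (n : ℕ) : Set (FreeGroup (Fin n)) :=
  {r | (∃ i j : Fin n, (i : ℕ) + 1 = (j : ℕ) ∧
          r = FreeGroup.of i * FreeGroup.of j * FreeGroup.of i *
              (FreeGroup.of j * FreeGroup.of i * FreeGroup.of j)⁻¹) ∨
       (∃ i j : Fin n, (i : ℕ) + 2 ≤ (j : ℕ) ∧
          r = FreeGroup.of i * FreeGroup.of j * (FreeGroup.of j * FreeGroup.of i)⁻¹)}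

/-- The Artin braid group `B_n` on `n` strands, with the `n-1` generators
`σ_1, …, σ_{n-1}`. -/
abbrev BraidGroup (n : ℕ) : Type := PresentedGroup (braidRels (n-1))

/-- The generator `σ_i` of the braid group `B_n` (junk value `1` when `i` is
out of range). -/
def σB (n : ℕ) (i : ℕ) : BraidGroup n :=
  if h : 1 ≤ i ∧ i < n then PresentedGroup.of (⟨i - 1, by omega⟩ : Fin (n-1)) else 1

/-- `η_i = σ_{i-1} ⋯ σ₂ σ₁² σ₂ ⋯ σ_{i-1}` in `B_n`. -/
def ηB (n : ℕ) (i : ℕ) : BraidGroup n := genY (σB n) i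

/-- `ω_i = (σ₁ ⋯ σ_{i-1})^i` in `B_n`. -/
def ωB (n : ℕ) (i : ℕ) : BraidGroup n := genW (σB n) i

/-! ## The Grothendieck-Teichmüller group -/

/-- The standard generators of the pure braid group `P₄ ⊂ B₄`, in the order
`x₁₂, x₁₃, x₁₄, x₂₃, x₂₄, x₃₄`. -/
def xGen : Fin 6 → BraidGroup 4 :=
  ![(σB 4 1)^2,
    σB 4 2 * (σB 4 1)^2 * (σB 4 2)⁻¹,
    σB 4 3 * σB 4 2 * (σB 4 1)^2 * (σB 4 2)⁻¹ * (σB 4 3)⁻¹,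
    (σB 4 2)^2,
    σB 4 3 * (σB 4 2)^2 * (σB 4 3)⁻¹,
    (σB 4 3)^2]

/-- The pure braid group `P₄` as a subgroup of `B₄`. -/
def P4 : Subgroup (BraidGroup 4) := Subgroup.closure (Set.range xGen)

/-- The generators `x_{ij}` as elements of `P₄`. -/
def xP (k : Fin 6) : P4 := ⟨xGen k, Subgroup.subset_closure (Set.mem_range_self k)⟩

/-- The pair `(l, f)` belongs to the Grothendieck–Teichmüller group `GT`:
`l ∈ Ẑ×`, `l - 1 ∈ 2Ẑ`, `f` lies in the closure of the commutator subgroup of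
`F̂₂` and the relations (I), (II), (III) hold. -/
def IsGT (Z : ZhatModel) (F2 : F2Model) (l : Z.R) (f : F2.F) : Prop :=
  IsUnit l ∧ (∃ m : Z.R, l - 1 = 2 * m) ∧
  f ∈ (commutator F2.F).topologicalClosure ∧
  -- (I)
  F2.eval f F2.x F2.y * F2.eval f F2.y F2.x = 1 ∧
  -- (II)
  (∀ m : Z.R, l - 1 = 2 * m →
    F2.eval f (F2.x * F2.y)⁻¹ F2.x * Z.pow ((F2.x * F2.y)⁻¹) m *
      F2.eval f F2.y ((F2.x * F2.y)⁻¹) * Z.pow F2.y m *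
      F2.eval f F2.x F2.y * Z.pow F2.x m = 1) ∧
  -- (III), in (any model of) the profinite completion of the pure braid group P₄
  (∀ CP : ProfiniteCompletionModel P4,
    F2.eval f (CP.ι (xP 0)) (CP.ι (xP 3) * CP.ι (xP 4)) *
      F2.eval f (CP.ι (xP 1) * CP.ι (xP 3)) (CP.ι (xP 5)) =
    F2.eval f (CP.ι (xP 3)) (CP.ι (xP 5)) *
      F2.eval f (CP.ι (xP 0) * CP.ι (xP 1)) (CP.ι (xP 4) * CP.ι (xP 5)) *
      F2.eval f (CP.ι (xP 0)) (CP.ι (xP 3)))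
/-! ## Words for the mapping class group -/

section MCGWords

variable {G : Type*} [Group G] (d : G) (a : ℕ → G)

/-- `t_k = a_{2k} a_{2k-1} a_{2k+1} a_{2k}`. -/
def tA (k : ℕ) : G := a (2*k) * a (2*k - 1) * a (2*k + 1) * a (2*k)

/-- `d' = y₅ d y₅⁻¹`. -/
def dpA : G := genY a 5 * d * (genY a 5)⁻¹

/-- `d₃ = (t₁⁻¹t₂⁻¹ d t₂t₁)(t₂⁻¹ d t₂) d a₁⁻¹ a₃⁻¹ a₅⁻¹`. -/
def d3A : G :=
  ((tA a 1)⁻¹ * (tA a 2)⁻¹ * d * tA a 2 * tA a 1) * ((tA a 2)⁻¹ * d * tA a 2) * d *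
    (a 1)⁻¹ * (a 3)⁻¹ * (a 5)⁻¹

/-- The element `t₂t₁t₃t₂`. -/
def tfour : G := tA a 2 * tA a 1 * tA a 3 * tA a 2

/-- The relator expressing relation (C'): `d'` commutes with `(t₂t₁t₃t₂) d (t₂t₁t₃t₂)⁻¹`. -/
def relCpA : G :=
  dpA d a * (tfour a * d * (tfour a)⁻¹) * (dpA d a)⁻¹ * (tfour a * d * (tfour a)⁻¹)⁻¹

/-- `v₁ = d'`, `v_i = (t_{i-1} t_i) v_{i-1} (t_{i-1} t_i)⁻¹`. -/
def vA : ℕ → G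
  | 0 => 1
  | 1 => dpA d a
  | (i+2) => (tA a (i+1) * tA a (i+2)) * vA (i+1) * (tA a (i+1) * tA a (i+2))⁻¹

/-- `u_i = a_{2i} a_{2i+1} a_{2i+2} v_i (a_{2i+2} a_{2i+1} a_{2i} a_{2i-1})⁻¹`. -/
def uA (i : ℕ) : G :=
  a (2*i) * a (2*i+1) * a (2*i+2) * vA d a i *
    (a (2*i+2) * a (2*i+1) * a (2*i) * a (2*i - 1))⁻¹

/-- `d_g = (u₁⋯u_{g-1})⁻¹ a₁ (u₁⋯u_{g-1})`. -/
def dgA (g : ℕ) : G :=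
  (genProd (uA d a) (g-1))⁻¹ * a 1 * genProd (uA d a) (g-1)

/-- The relator of relation (D): `y_{2g+1} d_g y_{2g+1}⁻¹ = d_g`. -/
def relDA (g : ℕ) : G :=
  genY a (2*g+1) * dgA d a g * (genY a (2*g+1))⁻¹ * (dgA d a g)⁻¹

/-- `genProd2 b k = b 2 * b 3 * ⋯ * b k`. -/
def genProd2 (b : ℕ → G) : ℕ → G
  | 0 => 1
  | 1 => 1
  | (k+2) => genProd2 b (k+1) * b (k+2)

/-- `TTA a i = (t₂⋯t_i)·(t₁⋯t_{i-1})`. -/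
def TTA (i : ℕ) : G := genProd2 (tA a) i * genProd (tA a) (i-1)

/-- The sequence `d₁ = a₁`, `d₂ = d`,
`d_{i+1} = a_{2i+1}⁻¹ a_{2i-1}⁻¹ d_{i-1}⁻¹ g_{2,i} g_{1,i} d_i`
where `g_{1,i} = t_i⁻¹ d_i t_i` and `g_{2,i} = (t₂⋯t_i t₁⋯t_{i-1})⁻¹ d (t₂⋯t_i t₁⋯t_{i-1})`. -/
def dSeq : ℕ → G
  | 0 => 1
  | 1 => a 1
  | 2 => d
  | (i+3) =>
    (a (2*(i+2)+1))⁻¹ * (a (2*(i+2) - 1))⁻¹ * (dSeq (i+1))⁻¹ *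
      ((TTA a (i+2))⁻¹ * d * TTA a (i+2)) *
      ((tA a (i+2))⁻¹ * dSeq (i+2) * tA a (i+2)) * dSeq (i+2)

/-- `g_{1,i} = t_i⁻¹ d_i t_i`. -/
def g1A (i : ℕ) : G := (tA a i)⁻¹ * dSeq d a i * tA a i

/-- `g_{2,i} = (t₂⋯t_i · t₁⋯t_{i-1})⁻¹ d (t₂⋯t_i · t₁⋯t_{i-1})`. -/
def g2A (i : ℕ) : G := (TTA a i)⁻¹ * d * TTA a i

/-- `d′_i = y_{2i+1} d_i y_{2i+1}⁻¹`. -/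
def dpSeq (i : ℕ) : G := genY a (2*i+1) * dSeq d a i * (genY a (2*i+1))⁻¹

/-- `g′_{1,i} = t_i⁻¹ d′_i t_i`. -/
def g1pA (i : ℕ) : G := (tA a i)⁻¹ * dpSeq d a i * tA a i

/-- `g′_{2,i} = (t₂⋯t_i · t₁⋯t_{i-1})⁻¹ d′ (t₂⋯t_i · t₁⋯t_{i-1})`. -/
def g2pA (i : ℕ) : G := (TTA a i)⁻¹ * dpA d a * TTA a i

/-- `W_k = (t₁⋯t_{k-1})^k`. -/
def WWA (k : ℕ) : G := genW (tA a) k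

/-- `Y_k = t_{k-1}⋯t₂t₁²t₂⋯t_{k-1}`. -/
def YYA (k : ℕ) : G := genY (tA a) k

end MCGWords

/-! ## The Wajnryb presentation of the mapping class group `Γ_{g,1}` -/

/-- The free-group generator `d`. -/
def dF (g : ℕ) : FreeGroup (Fin (2*g+1)) := FreeGroup.of ⟨0, by omega⟩

/-- The free-group generators `a_i`, `1 ≤ i ≤ 2g` (junk value `1` out of range). -/
def aF (g : ℕ) (i : ℕ) : FreeGroup (Fin (2*g+1)) :=
  if h : 1 ≤ i ∧ i ≤ 2*g then FreeGroup.of ⟨i, by omega⟩ else 1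

/-- The relators of the Wajnryb presentation of `Γ_{g,1}`: relations (A), (B),
(C) (when `g ≥ 3`) and (C') (when `g ≥ 4`). -/
def mcgRels (g : ℕ) : Set (FreeGroup (Fin (2*g+1))) :=
  {r | (∃ i : ℕ, 1 ≤ i ∧ i + 1 ≤ 2*g ∧
          r = aF g i * aF g (i+1) * aF g i * (aF g (i+1) * aF g i * aF g (i+1))⁻¹) ∨
       (∃ i j : ℕ, 1 ≤ i ∧ j ≤ 2*g ∧ i + 2 ≤ j ∧
          r = aF g i * aF g j * (aF g j * aF g i)⁻¹) ∨
       (r = dF g * aF g 4 * dF g * (aF g 4 * dF g * aF g 4)⁻¹) ∨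
       (∃ j : ℕ, 1 ≤ j ∧ j ≤ 2*g ∧ j ≠ 4 ∧
          r = dF g * aF g j * (aF g j * dF g)⁻¹) ∨
       (r = dF g * dpA (dF g) (aF g) * ((aF g 1 * aF g 2 * aF g 3)^4)⁻¹) ∨
       (3 ≤ g ∧ r = d3A (dF g) (aF g) * aF g 6 * d3A (dF g) (aF g) *
          (aF g 6 * d3A (dF g) (aF g) * aF g 6)⁻¹) ∨
       (4 ≤ g ∧ r = relCpA (dF g) (aF g))}

/-- The mapping class group `Γ_{g,1}` of a genus-`g` surface with one marked point,
via its Wajnryb presentation. -/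
abbrev Gamma1 (g : ℕ) : Type := PresentedGroup (mcgRels g)

/-- The generator `d` of `Γ_{g,1}`. -/
def dM (g : ℕ) : Gamma1 g := PresentedGroup.of ⟨0, by omega⟩

/-- The generators `a_i` of `Γ_{g,1}` (junk value `1` out of range). -/
def aM (g : ℕ) (i : ℕ) : Gamma1 g :=
  if h : 1 ≤ i ∧ i ≤ 2*g then PresentedGroup.of ⟨i, by omega⟩ else 1

/-- The mapping class group `Γ_{g,0}` of a closed genus-`g` surface, obtained from the
Wajnryb presentation of `Γ_{g,1}` by adding the single relation (D). -/
abbrev Gamma0 (g : ℕ) : Type :=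
  PresentedGroup (mcgRels g ∪ {relDA (dF g) (aF g) g})

/-- The generator `d` of `Γ_{g,0}`. -/
def dM0 (g : ℕ) : Gamma0 g := PresentedGroup.of ⟨0, by omega⟩

/-- The generators `a_i` of `Γ_{g,0}` (junk value `1` out of range). -/
def aM0 (g : ℕ) (i : ℕ) : Gamma0 g :=
  if h : 1 ≤ i ∧ i ≤ 2*g then PresentedGroup.of ⟨i, by omega⟩ else 1

/-! ## Infrastructure for the proof of the Haiku Lemma -/

section HaikuInfra

theorem IsProfiniteGroup.closedSubgroup {G : Type} [Group G] [TopologicalSpace G]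
    [IsProfiniteGroup G] (S : Subgroup G) (hS : IsClosed (S : Set G)) :
    IsProfiniteGroup S := by
  haveI : CompactSpace S := isCompact_iff_compactSpace.mp hS.isCompact
  exact ⟨⟩

variable {G : Type} [Group G] [TopologicalSpace G] [IsProfiniteGroup G]

theorem isClosed_centralizer (c : G) :
    IsClosed ((Subgroup.centralizer {c} : Subgroup G) : Set G) := by
  have h : ((Subgroup.centralizer {c} : Subgroup G) : Set G) = {h : G | c * h = h * c} := by
    ext h
    simp [Subgroup.mem_centralizer_iff]
  rw [h]
  exact isClosed_eq (continuous_const.mul continuous_id) (continuous_id.mul continuous_const)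

/-- `F̂₂` is topologically generated by `x` and `y`. -/
theorem F2Model.gen_top (F2 : F2Model) :
    (Subgroup.closure {F2.x, F2.y}).topologicalClosure = ⊤ := by
  set K := (Subgroup.closure {F2.x, F2.y}).topologicalClosure with hKdef
  haveI : IsProfiniteGroup K :=
    IsProfiniteGroup.closedSubgroup _ (Subgroup.isClosed_topologicalClosure _)
  have hx : F2.x ∈ K :=
    (Subgroup.le_topologicalClosure _) (Subgroup.subset_closure (by simp))
  have hy : F2.y ∈ K :=
    (Subgroup.le_topologicalClosure _) (Subgroup.subset_closure (by simp))
  obtain ⟨φ, ⟨hφx, hφy⟩, -⟩ := F2.free K ⟨F2.x, hx⟩ ⟨F2.y, hy⟩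
  let ι : ContinuousMonoidHom K F2.F := ⟨K.subtype, continuous_subtype_val⟩
  have h1 : ι.comp φ = ContinuousMonoidHom.id F2.F := by
    refine (F2.free F2.F F2.x F2.y).unique ⟨?_, ?_⟩ ⟨rfl, rfl⟩
    · show ι (φ F2.x) = F2.x
      rw [hφx]
      rfl
    · show ι (φ F2.y) = F2.y
      rw [hφy]
      rfl
  rw [Subgroup.eq_top_iff']
  intro w
  have h2 : ι (φ w) = w := DFunLike.congr_fun h1 w
  exact h2 ▸ (φ w).2

theorem ZhatModel.profinite_mult (Z : ZhatModel) : IsProfiniteGroup (Multiplicative Z.R) := by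
  haveI : CompactSpace (Multiplicative Z.R) := inferInstanceAs (CompactSpace Z.R)
  haveI : T2Space (Multiplicative Z.R) := inferInstanceAs (T2Space Z.R)
  haveI : TotallyDisconnectedSpace (Multiplicative Z.R) :=
    inferInstanceAs (TotallyDisconnectedSpace Z.R)
  exact ⟨⟩

/-- `Ẑ` is topologically generated by `1`. -/
theorem ZhatModel.gen_top (Z : ZhatModel) :
    (Subgroup.closure {Multiplicative.ofAdd (1 : Z.R)}).topologicalClosure = ⊤ := by
  haveI := Z.profinite_mult
  set K := (Subgroup.closure {Multiplicative.ofAdd (1 : Z.R)}).topologicalClosure with hKdef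
  haveI : IsProfiniteGroup K :=
    IsProfiniteGroup.closedSubgroup _ (Subgroup.isClosed_topologicalClosure _)
  have h1 : Multiplicative.ofAdd (1 : Z.R) ∈ K :=
    (Subgroup.le_topologicalClosure _) (Subgroup.subset_closure (by simp))
  obtain ⟨φ, hφ, -⟩ := Z.free K ⟨_, h1⟩
  let ι : ContinuousMonoidHom K (Multiplicative Z.R) := ⟨K.subtype, continuous_subtype_val⟩
  have h2 : ι.comp φ = ContinuousMonoidHom.id (Multiplicative Z.R) := by
    refine (Z.free (Multiplicative Z.R) (Multiplicative.ofAdd 1)).unique ?_ rfl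
    show ι (φ _) = _
    rw [hφ]
    rfl
  rw [Subgroup.eq_top_iff']
  intro w
  have h3 : ι (φ w) = w := DFunLike.congr_fun h2 w
  exact h3 ▸ (φ w).2

theorem F2_maps_into (F2 : F2Model) (θ : ContinuousMonoidHom F2.F G) (S : Subgroup G)
    (hS : IsClosed (S : Set G)) (hx : θ F2.x ∈ S) (hy : θ F2.y ∈ S) (w : F2.F) :
    θ w ∈ S := by
  have hle : (Subgroup.closure {F2.x, F2.y}).topologicalClosure ≤ S.comap θ.toMonoidHom := by
    refine Subgroup.topologicalClosure_minimal _ ((Subgroup.closure_le _).mpr ?_) ?_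
    · intro z hz
      rcases hz with h | h
      · subst h; exact Subgroup.mem_comap.mpr hx
      · rw [Set.mem_singleton_iff] at h; subst h; exact Subgroup.mem_comap.mpr hy
    · have : ((S.comap θ.toMonoidHom : Subgroup F2.F) : Set F2.F) = θ ⁻¹' S := rfl
      rw [this]
      exact hS.preimage θ.continuous
  have hw : w ∈ (Subgroup.closure {F2.x, F2.y}).topologicalClosure := by
    rw [F2.gen_top]; trivial
  exact hle hw

theorem Zhat_maps_into (Z : ZhatModel) (θ : ContinuousMonoidHom (Multiplicative Z.R) G)
    (S : Subgroup G) (hS : IsClosed (S : Set G))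
    (h1 : θ (Multiplicative.ofAdd (1 : Z.R)) ∈ S) (l : Z.R) :
    θ (Multiplicative.ofAdd l) ∈ S := by
  have hle : (Subgroup.closure {Multiplicative.ofAdd (1 : Z.R)}).topologicalClosure
      ≤ S.comap θ.toMonoidHom := by
    refine Subgroup.topologicalClosure_minimal _ ((Subgroup.closure_le _).mpr ?_) ?_
    · intro z hz
      rw [Set.mem_singleton_iff] at hz
      subst hz
      exact Subgroup.mem_comap.mpr h1
    · have : ((S.comap θ.toMonoidHom : Subgroup _) : Set (Multiplicative Z.R)) = θ ⁻¹' S := rfl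
      rw [this]
      exact hS.preimage θ.continuous
  have hw : Multiplicative.ofAdd l ∈
      (Subgroup.closure {Multiplicative.ofAdd (1 : Z.R)}).topologicalClosure := by
    rw [Z.gen_top]; trivial
  exact hle hw

namespace ZhatModel

variable (Z : ZhatModel)

noncomputable def powHom (a : G) : ContinuousMonoidHom (Multiplicative Z.R) G :=
  (Z.free G a).exists.choose

theorem powHom_spec (a : G) : Z.powHom a (Multiplicative.ofAdd 1) = a :=
  (Z.free G a).exists.choose_spec

theorem pow_def (a : G) (l : Z.R) : Z.pow a l = Z.powHom a (Multiplicative.ofAdd l) := rfl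

theorem pow_unique (a : G) (θ : ContinuousMonoidHom (Multiplicative Z.R) G)
    (h : θ (Multiplicative.ofAdd 1) = a) (l : Z.R) :
    θ (Multiplicative.ofAdd l) = Z.pow a l := by
  rw [pow_def]
  exact DFunLike.congr_fun ((Z.free G a).unique h (Z.powHom_spec a)) _

theorem pow_base_one (l : Z.R) : Z.pow (1 : G) l = 1 :=
  (Z.pow_unique (1 : G) ⟨1, continuous_const⟩ rfl l).symm

theorem pow_one_exp (a : G) : Z.pow a (1 : Z.R) = a := Z.powHom_spec a

theorem map_pow {H : Type} [Group H] [TopologicalSpace H] [IsProfiniteGroup H]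
    (θ : ContinuousMonoidHom G H) (a : G) (l : Z.R) :
    θ (Z.pow a l) = Z.pow (θ a) l :=
  Z.pow_unique (θ a) (θ.comp (Z.powHom a))
    (by show θ (Z.powHom a (Multiplicative.ofAdd 1)) = θ a; rw [Z.powHom_spec]) l

theorem pow_add (a : G) (l l' : Z.R) :
    Z.pow a (l + l') = Z.pow a l * Z.pow a l' := by
  rw [pow_def, pow_def, pow_def, ofAdd_add]
  exact map_mul (Z.powHom a) _ _

theorem pow_mem (S : Subgroup G) (hS : IsClosed (S : Set G)) {a : G}
    (ha : a ∈ S) (l : Z.R) : Z.pow a l ∈ S := by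
  rw [pow_def]
  exact Zhat_maps_into Z (Z.powHom a) S hS (by rw [Z.powHom_spec]; exact ha) l

theorem parity (s : Z.R) : (∃ u, s = 2 * u) ∨ (∃ u, s = 1 + 2 * u) := by
  haveI := Z.profinite_mult
  set V : Set Z.R :=
    (Set.range fun u : Z.R => 2 * u) ∪ (Set.range fun u : Z.R => 1 + 2 * u) with hV
  have hVc : IsClosed V := by
    refine IsClosed.union ?_ ?_
    · exact (isCompact_range (continuous_const.mul continuous_id)).isClosed
    · exact (isCompact_range (continuous_const.add (continuous_const.mul continuous_id))).isClosed
  have key : Multiplicative.ofAdd s ∈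
      (Subgroup.closure {Multiplicative.ofAdd (1 : Z.R)}).topologicalClosure := by
    rw [Z.gen_top]; trivial
  have hsub : ((Subgroup.closure {Multiplicative.ofAdd (1 : Z.R)}) : Set (Multiplicative Z.R))
      ⊆ Multiplicative.toAdd ⁻¹' V := by
    intro t ht
    rw [SetLike.mem_coe, Subgroup.mem_closure_singleton] at ht
    obtain ⟨n, hn⟩ := ht
    have htA : Multiplicative.toAdd t = (n : Z.R) := by
      rw [← hn, toAdd_zpow]
      simp [zsmul_eq_mul]
    rcases Int.even_or_odd n with ⟨m, hm⟩ | ⟨m, hm⟩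
    · refine Or.inl ⟨(m : Z.R), ?_⟩
      rw [htA, hm]
      push_cast
      ring
    · refine Or.inr ⟨(m : Z.R), ?_⟩
      rw [htA, hm]
      push_cast
      ring
  have hcl : (↑(Subgroup.closure {Multiplicative.ofAdd (1 : Z.R)}).topologicalClosure :
      Set (Multiplicative Z.R)) ⊆ Multiplicative.toAdd ⁻¹' V := by
    rw [Subgroup.topologicalClosure_coe]
    exact closure_minimal hsub (hVc.preimage continuous_toAdd)
  have hmem : Multiplicative.toAdd (Multiplicative.ofAdd s) ∈ V := hcl key
  rw [toAdd_ofAdd] at hmem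
  rcases hmem with ⟨u, hu⟩ | ⟨u, hu⟩
  · exact Or.inl ⟨u, hu.symm⟩
  · exact Or.inr ⟨u, hu.symm⟩

end ZhatModel

namespace F2Model

variable (F2 : F2Model)

noncomputable def evalHom (a b : G) : ContinuousMonoidHom F2.F G :=
  (F2.free G a b).exists.choose

theorem evalHom_x (a b : G) : F2.evalHom a b F2.x = a := (F2.free G a b).exists.choose_spec.1

theorem evalHom_y (a b : G) : F2.evalHom a b F2.y = b := (F2.free G a b).exists.choose_spec.2

theorem eval_def (f : F2.F) (a b : G) : F2.eval f a b = F2.evalHom a b f := rfl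

theorem eval_unique (a b : G) (θ : ContinuousMonoidHom F2.F G)
    (hx : θ F2.x = a) (hy : θ F2.y = b) (f : F2.F) : θ f = F2.eval f a b := by
  rw [eval_def]
  exact DFunLike.congr_fun
    ((F2.free G a b).unique ⟨hx, hy⟩ ⟨F2.evalHom_x a b, F2.evalHom_y a b⟩) f

end F2Model

end HaikuInfra

/-! ## More infrastructure: closures of cyclic subgroups -/

section ClosureBar

variable {G : Type} [Group G] [TopologicalSpace G] [IsProfiniteGroup G]

theorem closureBar_le_centralizer {gg c : G} (h : gg * c = c * gg) :
    (Subgroup.closure {gg}).topologicalClosure ≤ Subgroup.centralizer {c} := by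
  refine Subgroup.topologicalClosure_minimal _ ((Subgroup.closure_le _).mpr ?_)
    (isClosed_centralizer c)
  intro z hz
  rw [Set.mem_singleton_iff] at hz
  subst hz
  refine Subgroup.mem_centralizer_iff.mpr ?_
  rintro h' hh
  rw [Set.mem_singleton_iff] at hh
  subst hh
  exact h.symm

theorem mem_closureBar_comm {gg c : G} (h : gg * c = c * gg) :
    ∀ k ∈ (Subgroup.closure {gg}).topologicalClosure, c * k = k * c := by
  intro k hk
  exact Subgroup.mem_centralizer_iff.mp (closureBar_le_centralizer h hk) c rfl

theorem closureBar_abelian (gg : G) :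
    ∀ k ∈ (Subgroup.closure {gg}).topologicalClosure,
      ∀ k' ∈ (Subgroup.closure {gg}).topologicalClosure, k * k' = k' * k := by
  intro k hk k' hk'
  have h1 : gg * k = k * gg := mem_closureBar_comm rfl k hk
  exact mem_closureBar_comm h1 k' hk'

theorem closureBar_inverted {gg b : G} (hgb : b * gg = gg⁻¹ * b) :
    ∀ k ∈ (Subgroup.closure {gg}).topologicalClosure, b * k = k⁻¹ * b := by
  set K := (Subgroup.closure {gg}).topologicalClosure with hKdef
  let T : Subgroup G :=
  { carrier := {k | k ∈ K ∧ b * k = k⁻¹ * b}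
    one_mem' := ⟨K.one_mem, by simp⟩
    mul_mem' := by
      rintro k1 k2 ⟨hk1K, hk1⟩ ⟨hk2K, hk2⟩
      refine ⟨K.mul_mem hk1K hk2K, ?_⟩
      have hcomm : k1⁻¹ * k2⁻¹ = k2⁻¹ * k1⁻¹ :=
        closureBar_abelian gg _ (K.inv_mem hk1K) _ (K.inv_mem hk2K)
      calc b * (k1 * k2) = (b * k1) * k2 := by group
        _ = k1⁻¹ * (b * k2) := by rw [hk1]; group
        _ = k1⁻¹ * (k2⁻¹ * b) := by rw [hk2]
        _ = (k1 * k2)⁻¹ * b := by rw [mul_inv_rev, ← hcomm]; group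
    inv_mem' := by
      rintro k ⟨hkK, hk⟩
      refine ⟨K.inv_mem hkK, ?_⟩
      have h1 : b = k⁻¹ * b * k⁻¹ := by rw [← hk]; group
      calc b * k⁻¹ = k * (k⁻¹ * b * k⁻¹) := by group
        _ = k * b := by rw [← h1]
        _ = (k⁻¹)⁻¹ * b := by rw [inv_inv] }
  have hTc : IsClosed (T : Set G) := by
    have he : (T : Set G) = (K : Set G) ∩ {k | b * k = k⁻¹ * b} := rfl
    rw [he]
    exact (Subgroup.isClosed_topologicalClosure _).inter
      (isClosed_eq (continuous_const.mul continuous_id)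
        (continuous_inv.mul continuous_const))
  have hle : K ≤ T := by
    refine Subgroup.topologicalClosure_minimal _ ((Subgroup.closure_le _).mpr ?_) hTc
    intro z hz
    rw [Set.mem_singleton_iff] at hz
    subst hz
    exact ⟨Subgroup.le_topologicalClosure _ (Subgroup.subset_closure rfl), hgb⟩
  intro k hk
  exact (hle hk).2

end ClosureBar

/-! ## Case bookkeeping for part (iii) -/

section HaikuCases

variable {F G : Type} [Group F] [Group G]

/-- Case 1: `ψ w = φ w` and `φ w` centralizes `K`. -/
def HC1 (φ ψ : F →* G) (K : Subgroup G) (w : F) : Prop :=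
  ψ w = φ w ∧ ∀ k ∈ K, φ w * k = k * φ w

/-- Case 2: `ψ w = φ w * g⁻¹` and `φ w` inverts `K` by conjugation. -/
def HC2 (φ ψ : F →* G) (K : Subgroup G) (g : G) (w : F) : Prop :=
  ψ w = φ w * g⁻¹ ∧ ∀ k ∈ K, φ w * k = k⁻¹ * φ w

variable {φ ψ : F →* G} {K : Subgroup G} {g : G}

theorem HC1.one : HC1 φ ψ K 1 :=
  ⟨by rw [map_one, map_one], fun k _ => by rw [map_one, one_mul, mul_one]⟩

theorem HC1.mul11 {u v : F} (hu : HC1 φ ψ K u) (hv : HC1 φ ψ K v) : HC1 φ ψ K (u * v) := by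
  obtain ⟨hu1, hu2⟩ := hu
  obtain ⟨hv1, hv2⟩ := hv
  constructor
  · rw [map_mul, map_mul, hu1, hv1]
  · intro k hk
    rw [map_mul, mul_assoc, hv2 k hk, ← mul_assoc, hu2 k hk, mul_assoc]

theorem HC1.mul12 {u v : F} (hu : HC1 φ ψ K u) (hv : HC2 φ ψ K g v) :
    HC2 φ ψ K g (u * v) := by
  obtain ⟨hu1, hu2⟩ := hu
  obtain ⟨hv1, hv2⟩ := hv
  constructor
  · rw [map_mul, map_mul, hu1, hv1, ← mul_assoc]
  · intro k hk
    rw [map_mul, mul_assoc, hv2 k hk, ← mul_assoc, hu2 k⁻¹ (K.inv_mem hk), mul_assoc]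

theorem HC2.mul21 (hg : g ∈ K) {u v : F} (hu : HC2 φ ψ K g u) (hv : HC1 φ ψ K v) :
    HC2 φ ψ K g (u * v) := by
  obtain ⟨hu1, hu2⟩ := hu
  obtain ⟨hv1, hv2⟩ := hv
  constructor
  · rw [map_mul, map_mul, hu1, hv1, mul_assoc, ← hv2 g⁻¹ (K.inv_mem hg), ← mul_assoc]
  · intro k hk
    rw [map_mul, mul_assoc, hv2 k hk, ← mul_assoc, hu2 k hk, mul_assoc]

theorem HC2.mul22 (hg : g ∈ K) {u v : F} (hu : HC2 φ ψ K g u) (hv : HC2 φ ψ K g v) :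
    HC1 φ ψ K (u * v) := by
  obtain ⟨hu1, hu2⟩ := hu
  obtain ⟨hv1, hv2⟩ := hv
  constructor
  · rw [map_mul, map_mul, hu1, hv1]
    calc (φ u * g⁻¹) * (φ v * g⁻¹)
        = φ u * (g⁻¹ * φ v) * g⁻¹ := by group
      _ = φ u * (φ v * g) * g⁻¹ := by rw [← hv2 g hg]
      _ = φ u * φ v := by group
  · intro k hk
    rw [map_mul, mul_assoc, hv2 k hk, ← mul_assoc, hu2 k⁻¹ (K.inv_mem hk), inv_inv, mul_assoc]

theorem HC1.inv {u : F} (hu : HC1 φ ψ K u) : HC1 φ ψ K u⁻¹ := by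
  obtain ⟨hu1, hu2⟩ := hu
  constructor
  · rw [map_inv, map_inv, hu1]
  · intro k hk
    rw [map_inv]
    have hc : Commute (φ u) k := hu2 k hk
    exact hc.inv_left.eq

theorem HC2.inv (hg : g ∈ K) {u : F} (hu : HC2 φ ψ K g u) : HC2 φ ψ K g u⁻¹ := by
  obtain ⟨hu1, hu2⟩ := hu
  have hact : ∀ k ∈ K, (φ u)⁻¹ * k = k⁻¹ * (φ u)⁻¹ := by
    intro k hk
    have A : φ u * k⁻¹ = k * φ u := by
      have h := hu2 k⁻¹ (K.inv_mem hk)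
      rwa [inv_inv] at h
    calc (φ u)⁻¹ * k = (φ u)⁻¹ * (k * φ u) * (φ u)⁻¹ := by group
      _ = (φ u)⁻¹ * (φ u * k⁻¹) * (φ u)⁻¹ := by rw [A]
      _ = k⁻¹ * (φ u)⁻¹ := by group
  constructor
  · rw [map_inv, map_inv, hu1, mul_inv_rev, inv_inv]
    have h := hact g⁻¹ (K.inv_mem hg)
    rw [inv_inv] at h
    exact h.symm
  · intro k hk
    rw [map_inv]
    exact hact k hk

end HaikuCases

/-! ## The three parts of the Haiku Lemma -/

section HaikuParts

open scoped commutatorElement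

variable {G : Type} [Group G] [TopologicalSpace G] [IsProfiniteGroup G]

/-- Part (i). -/
theorem haiku_part_i (F2 : F2Model) (f : F2.F) (a b A B : G)
    (haA : Commute a A) (haB : Commute a B) (hbA : Commute b A) (hbB : Commute b B) :
    F2.eval f a b * F2.eval f A B = F2.eval f (a * A) (b * B) := by
  obtain ⟨φ₁, hφ₁x, hφ₁y, hφ₁e⟩ : ∃ φ₁ : ContinuousMonoidHom F2.F G,
      φ₁ F2.x = a ∧ φ₁ F2.y = b ∧ ∀ f', F2.eval f' a b = φ₁ f' :=
    ⟨F2.evalHom a b, F2.evalHom_x a b, F2.evalHom_y a b, fun f' => F2.eval_def f' a b⟩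
  obtain ⟨φ₂, hφ₂x, hφ₂y, hφ₂e⟩ : ∃ φ₂ : ContinuousMonoidHom F2.F G,
      φ₂ F2.x = A ∧ φ₂ F2.y = B ∧ ∀ f', F2.eval f' A B = φ₂ f' :=
    ⟨F2.evalHom A B, F2.evalHom_x A B, F2.evalHom_y A B, fun f' => F2.eval_def f' A B⟩
  have h1 : ∀ w, φ₁ w ∈ Subgroup.centralizer {A} ⊓ Subgroup.centralizer {B} := by
    intro w
    refine F2_maps_into F2 φ₁ _
      ((isClosed_centralizer A).inter (isClosed_centralizer B)) ?_ ?_ w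
    · rw [hφ₁x]
      refine Subgroup.mem_inf.mpr ⟨?_, ?_⟩
      · refine Subgroup.mem_centralizer_iff.mpr ?_
        rintro h hh; rw [Set.mem_singleton_iff] at hh; subst hh; exact haA.symm.eq
      · refine Subgroup.mem_centralizer_iff.mpr ?_
        rintro h hh; rw [Set.mem_singleton_iff] at hh; subst hh; exact haB.symm.eq
    · rw [hφ₁y]
      refine Subgroup.mem_inf.mpr ⟨?_, ?_⟩
      · refine Subgroup.mem_centralizer_iff.mpr ?_
        rintro h hh; rw [Set.mem_singleton_iff] at hh; subst hh; exact hbA.symm.eq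
      · refine Subgroup.mem_centralizer_iff.mpr ?_
        rintro h hh; rw [Set.mem_singleton_iff] at hh; subst hh; exact hbB.symm.eq
  have hAc : ∀ w, A * φ₁ w = φ₁ w * A := fun w =>
    Subgroup.mem_centralizer_iff.mp (Subgroup.mem_inf.mp (h1 w)).1 A rfl
  have hBc : ∀ w, B * φ₁ w = φ₁ w * B := fun w =>
    Subgroup.mem_centralizer_iff.mp (Subgroup.mem_inf.mp (h1 w)).2 B rfl
  have hcomm : ∀ w v : F2.F, φ₁ w * φ₂ v = φ₂ v * φ₁ w := by
    intro w v
    have h2 : φ₂ v ∈ Subgroup.centralizer {φ₁ w} := by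
      refine F2_maps_into F2 φ₂ _ (isClosed_centralizer _) ?_ ?_ v
      · rw [hφ₂x]
        refine Subgroup.mem_centralizer_iff.mpr ?_
        rintro h hh; rw [Set.mem_singleton_iff] at hh; subst hh
        exact (hAc w).symm
      · rw [hφ₂y]
        refine Subgroup.mem_centralizer_iff.mpr ?_
        rintro h hh; rw [Set.mem_singleton_iff] at hh; subst hh
        exact (hBc w).symm
    exact Subgroup.mem_centralizer_iff.mp h2 (φ₁ w) rfl
  let θ : ContinuousMonoidHom F2.F G :=
  { toFun := fun w => φ₁ w * φ₂ w
    map_one' := by show φ₁ 1 * φ₂ 1 = 1; rw [map_one, map_one, one_mul]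
    map_mul' := fun u v => by
      show φ₁ (u * v) * φ₂ (u * v) = (φ₁ u * φ₂ u) * (φ₁ v * φ₂ v)
      rw [map_mul, map_mul]
      calc φ₁ u * φ₁ v * (φ₂ u * φ₂ v)
          = φ₁ u * (φ₁ v * φ₂ u) * φ₂ v := by group
        _ = φ₁ u * (φ₂ u * φ₁ v) * φ₂ v := by rw [hcomm v u]
        _ = φ₁ u * φ₂ u * (φ₁ v * φ₂ v) := by group
    continuous_toFun := (map_continuous φ₁).mul (map_continuous φ₂) }
  have hx : θ F2.x = a * A := by
    show φ₁ F2.x * φ₂ F2.x = a * A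
    rw [hφ₁x, hφ₂x]
  have hy : θ F2.y = b * B := by
    show φ₁ F2.y * φ₂ F2.y = b * B
    rw [hφ₁y, hφ₂y]
  have hθ := F2.eval_unique (a * A) (b * B) θ hx hy f
  rw [← hθ, hφ₁e f, hφ₂e f]
  rfl

/-- Evaluation at `(1, g)` gives `g^s`. -/
theorem haiku_eval_one (Z : ZhatModel) (F2 : F2Model) (f : F2.F) (r s : Z.R)
    (habel : (QuotientGroup.mk f : F2.F ⧸ (commutator F2.F).topologicalClosure) =
      QuotientGroup.mk (Z.pow F2.x r * Z.pow F2.y s)) (gg : G) :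
    F2.eval f 1 gg = Z.pow gg s := by
  obtain ⟨ψ, hψx, hψy, hψe⟩ : ∃ ψ : ContinuousMonoidHom F2.F G,
      ψ F2.x = 1 ∧ ψ F2.y = gg ∧ ∀ f', F2.eval f' 1 gg = ψ f' :=
    ⟨F2.evalHom 1 gg, F2.evalHom_x 1 gg, F2.evalHom_y 1 gg, fun f' => F2.eval_def f' 1 gg⟩
  set K := (Subgroup.closure {gg}).topologicalClosure with hKdef
  have hKc : IsClosed (K : Set G) := Subgroup.isClosed_topologicalClosure _
  have hgK : gg ∈ K := Subgroup.le_topologicalClosure _ (Subgroup.subset_closure rfl)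
  have hmem : ∀ w, ψ w ∈ K := fun w =>
    F2_maps_into F2 ψ K hKc (by rw [hψx]; exact K.one_mem) (by rw [hψy]; exact hgK) w
  have hker : ∀ c ∈ (commutator F2.F).topologicalClosure, ψ c = 1 := by
    have hle : (commutator F2.F).topologicalClosure ≤ ψ.toMonoidHom.ker := by
      refine Subgroup.topologicalClosure_minimal _ ?_ ?_
      · rw [commutator_def, Subgroup.commutator_le]
        intro g1 _ g2 _
        rw [MonoidHom.mem_ker]
        show ψ ⁅g1, g2⁆ = 1
        rw [map_commutatorElement]
        exact commutatorElement_eq_one_iff_commute.mpr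
          (closureBar_abelian gg _ (hmem g1) _ (hmem g2))
      · have he : ((ψ.toMonoidHom.ker : Subgroup F2.F) : Set F2.F) = ⇑ψ ⁻¹' {1} := rfl
        rw [he]
        exact isClosed_singleton.preimage (map_continuous ψ)
    exact fun c hc => MonoidHom.mem_ker.mp (hle hc)
  have hdec : (Z.pow F2.x r * Z.pow F2.y s)⁻¹ * f ∈ (commutator F2.F).topologicalClosure := by
    have h0 : f⁻¹ * (Z.pow F2.x r * Z.pow F2.y s) ∈ (commutator F2.F).topologicalClosure :=
      QuotientGroup.eq.mp habel
    have h1 := ((commutator F2.F).topologicalClosure).inv_mem h0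
    rwa [mul_inv_rev, inv_inv] at h1
  have hfe : f = (Z.pow F2.x r * Z.pow F2.y s) * ((Z.pow F2.x r * Z.pow F2.y s)⁻¹ * f) :=
    (mul_inv_cancel_left _ _).symm
  rw [hψe f]
  conv_lhs => rw [hfe]
  rw [map_mul, map_mul, hker _ hdec, mul_one, Z.map_pow, Z.map_pow, hψx, hψy,
    Z.pow_base_one, one_mul]

/-- Part (ii). -/
theorem haiku_part_ii (Z : ZhatModel) (F2 : F2Model) (f : F2.F) (r s : Z.R)
    (habel : (QuotientGroup.mk f : F2.F ⧸ (commutator F2.F).topologicalClosure) =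
      QuotientGroup.mk (Z.pow F2.x r * Z.pow F2.y s))
    (a b gg : G) (h1 : Commute gg a) (h2 : Commute gg b) :
    F2.eval f a (gg * b) = F2.eval f a b * Z.pow gg s := by
  have h := haiku_part_i F2 f a b 1 gg (Commute.one_right a) h1.symm
    (Commute.one_right b) h2.symm
  rw [haiku_eval_one Z F2 f r s habel gg, mul_one, ← h2.eq] at h
  exact h.symm

/-- Part (iii). -/
theorem haiku_part_iii (Z : ZhatModel) (F2 : F2Model) (f : F2.F) (r s : Z.R)
    (habel : (QuotientGroup.mk f : F2.F ⧸ (commutator F2.F).topologicalClosure) =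
      QuotientGroup.mk (Z.pow F2.x r * Z.pow F2.y s))
    (a b gg : G) (hga : Commute gg a) (hgb : gg * b = b * gg⁻¹) :
    ((∃ s' : Z.R, s = 2 * s') → F2.eval f a (gg * b) = F2.eval f a b) ∧
    (¬(∃ s' : Z.R, s = 2 * s') → F2.eval f a (gg * b) = F2.eval f a b * gg⁻¹) := by
  obtain ⟨φ, hφx, hφy, hφe⟩ : ∃ φ : ContinuousMonoidHom F2.F G,
      φ F2.x = a ∧ φ F2.y = b ∧ ∀ f', F2.eval f' a b = φ f' :=
    ⟨F2.evalHom a b, F2.evalHom_x a b, F2.evalHom_y a b, fun f' => F2.eval_def f' a b⟩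
  obtain ⟨ψ, hψx, hψy, hψe⟩ : ∃ ψ : ContinuousMonoidHom F2.F G,
      ψ F2.x = a ∧ ψ F2.y = gg * b ∧ ∀ f', F2.eval f' a (gg * b) = ψ f' :=
    ⟨F2.evalHom a (gg * b), F2.evalHom_x a (gg * b), F2.evalHom_y a (gg * b),
      fun f' => F2.eval_def f' a (gg * b)⟩
  have hbg : b * gg = gg⁻¹ * b := by
    have h1 := congrArg (fun t => gg⁻¹ * t * gg) hgb
    simpa [mul_assoc] using h1
  set K := (Subgroup.closure {gg}).topologicalClosure with hKdef
  have hKc : IsClosed (K : Set G) := Subgroup.isClosed_topologicalClosure _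
  have hgK : gg ∈ K := Subgroup.le_topologicalClosure _ (Subgroup.subset_closure rfl)
  have hKa : ∀ k ∈ K, a * k = k * a := mem_closureBar_comm hga.eq
  have hKb : ∀ k ∈ K, b * k = k⁻¹ * b := closureBar_inverted hbg
  have hCx : HC1 φ.toMonoidHom ψ.toMonoidHom K F2.x := by
    constructor
    · show ψ F2.x = φ F2.x
      rw [hψx, hφx]
    · intro k hk
      show φ F2.x * k = k * φ F2.x
      rw [hφx]
      exact hKa k hk
  have hCy : HC2 φ.toMonoidHom ψ.toMonoidHom K gg F2.y := by
    constructor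
    · show ψ F2.y = φ F2.y * gg⁻¹
      rw [hψy, hφy]
      exact hgb
    · intro k hk
      show φ F2.y * k = k⁻¹ * φ F2.y
      rw [hφy]
      exact hKb k hk
  -- closedness of the relevant sets
  have hA : IsClosed {w : F2.F | ψ w = φ w} :=
    isClosed_eq (map_continuous ψ) (map_continuous φ)
  have hB : IsClosed {w : F2.F | ∀ k ∈ K, φ w * k = k * φ w} := by
    have he : {w : F2.F | ∀ k ∈ K, φ w * k = k * φ w} =
        ⋂ k ∈ (K : Set G), {w | φ w * k = k * φ w} := by
      ext w
      simp [Set.mem_iInter]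
    rw [he]
    exact isClosed_biInter fun k _ => isClosed_eq
      ((map_continuous φ).mul continuous_const) (continuous_const.mul (map_continuous φ))
  have hC : IsClosed {w : F2.F | ψ w = φ w * gg⁻¹} :=
    isClosed_eq (map_continuous ψ) ((map_continuous φ).mul continuous_const)
  have hD : IsClosed {w : F2.F | ∀ k ∈ K, φ w * k = k⁻¹ * φ w} := by
    have he : {w : F2.F | ∀ k ∈ K, φ w * k = k⁻¹ * φ w} =
        ⋂ k ∈ (K : Set G), {w | φ w * k = k⁻¹ * φ w} := by
      ext w
      simp [Set.mem_iInter]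
    rw [he]
    exact isClosed_biInter fun k _ => isClosed_eq
      ((map_continuous φ).mul continuous_const) (continuous_const.mul (map_continuous φ))
  -- the subgroup where case 1 holds
  let S1 : Subgroup F2.F :=
  { carrier := {w | HC1 φ.toMonoidHom ψ.toMonoidHom K w}
    one_mem' := HC1.one
    mul_mem' := fun hu hv => hu.mul11 hv
    inv_mem' := fun hu => hu.inv }
  have hS1c : IsClosed (S1 : Set F2.F) := hA.inter hB
  -- every element is in case 1 or case 2
  have hSP : ∀ w : F2.F, HC1 φ.toMonoidHom ψ.toMonoidHom K w ∨
      HC2 φ.toMonoidHom ψ.toMonoidHom K gg w := by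
    let SP : Subgroup F2.F :=
    { carrier := {w | HC1 φ.toMonoidHom ψ.toMonoidHom K w ∨
        HC2 φ.toMonoidHom ψ.toMonoidHom K gg w}
      one_mem' := Or.inl HC1.one
      mul_mem' := by
        rintro u v (hu | hu) (hv | hv)
        · exact Or.inl (hu.mul11 hv)
        · exact Or.inr (hu.mul12 hv)
        · exact Or.inr (hu.mul21 hgK hv)
        · exact Or.inl (hu.mul22 hgK hv)
      inv_mem' := by
        rintro u (hu | hu)
        · exact Or.inl hu.inv
        · exact Or.inr (hu.inv hgK) }
    have hSPc : IsClosed (SP : Set F2.F) := (hA.inter hB).union (hC.inter hD)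
    have hle : (Subgroup.closure {F2.x, F2.y}).topologicalClosure ≤ SP := by
      refine Subgroup.topologicalClosure_minimal _ ((Subgroup.closure_le _).mpr ?_) hSPc
      intro z hz
      rcases hz with h | h
      · subst h; exact Or.inl hCx
      · rw [Set.mem_singleton_iff] at h; subst h; exact Or.inr hCy
    intro w
    exact hle (by rw [F2.gen_top]; trivial)
  have hxr : HC1 φ.toMonoidHom ψ.toMonoidHom K (Z.pow F2.x r) :=
    Z.pow_mem S1 hS1c (show F2.x ∈ S1 from hCx) r
  have hsq : ∀ w : F2.F, HC1 φ.toMonoidHom ψ.toMonoidHom K (w * w) := by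
    intro w
    rcases hSP w with h | h
    · exact h.mul11 h
    · exact h.mul22 hgK h
  have hy2 : ∀ t : Z.R, HC1 φ.toMonoidHom ψ.toMonoidHom K (Z.pow F2.y (2 * t)) := by
    intro t
    rw [two_mul, Z.pow_add]
    exact hsq _
  have hcomm1 : ∀ u v : F2.F, HC1 φ.toMonoidHom ψ.toMonoidHom K ⁅u, v⁆ := by
    intro u v
    rw [commutatorElement_def]
    rcases hSP u with hu | hu <;> rcases hSP v with hv | hv
    · exact ((hu.mul11 hv).mul11 hu.inv).mul11 hv.inv
    · exact ((hu.mul12 hv).mul21 hgK hu.inv).mul22 hgK (hv.inv hgK)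
    · exact ((hu.mul21 hgK hv).mul22 hgK (hu.inv hgK)).mul11 hv.inv
    · exact ((hu.mul22 hgK hv).mul12 (hu.inv hgK)).mul22 hgK (hv.inv hgK)
  have hN1 : ∀ c ∈ (commutator F2.F).topologicalClosure,
      HC1 φ.toMonoidHom ψ.toMonoidHom K c := by
    have hle : (commutator F2.F).topologicalClosure ≤ S1 := by
      refine Subgroup.topologicalClosure_minimal _ ?_ hS1c
      rw [commutator_def, Subgroup.commutator_le]
      intro g1 _ g2 _
      exact hcomm1 g1 g2
    exact fun c hc => hle hc
  have hdec : (Z.pow F2.x r * Z.pow F2.y s)⁻¹ * f ∈ (commutator F2.F).topologicalClosure := by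
    have h0 : f⁻¹ * (Z.pow F2.x r * Z.pow F2.y s) ∈ (commutator F2.F).topologicalClosure :=
      QuotientGroup.eq.mp habel
    have h1 := ((commutator F2.F).topologicalClosure).inv_mem h0
    rwa [mul_inv_rev, inv_inv] at h1
  constructor
  · rintro ⟨s', rfl⟩
    have hC1p := hxr.mul11 (hy2 s')
    have h2 := hC1p.mul11 (hN1 _ hdec)
    rw [mul_inv_cancel_left] at h2
    rw [hψe f, hφe f]
    exact h2.1
  · intro hodd
    obtain ⟨s', hs'⟩ : ∃ u, s = 1 + 2 * u := by
      rcases Z.parity s with h | h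
      · exact absurd h hodd
      · exact h
    have hys : Z.pow F2.y s = F2.y * Z.pow F2.y (2 * s') := by
      rw [hs', Z.pow_add, Z.pow_one_exp]
    have hC2y2 := hCy.mul21 hgK (hy2 s')
    have hC2p : HC2 φ.toMonoidHom ψ.toMonoidHom K gg (Z.pow F2.x r * Z.pow F2.y s) := by
      rw [hys]
      exact hxr.mul12 hC2y2
    have h2 := hC2p.mul21 hgK (hN1 _ hdec)
    rw [mul_inv_cancel_left] at h2
    rw [hψe f, hφe f]
    exact h2.1

end HaikuParts

/-! ## STATEMENT 10 -/

/-- The Haiku Lemma: let `f ∈ F̂₂` have image `x^r y^s` in the abelianization of `F̂₂`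
(the quotient by the closure of the commutator subgroup).  Then in any profinite
group `G`: (i) if `a, b` both commute with `A, B` then `f(a,b) f(A,B) = f(aA, bB)`;
(ii) if `g` commutes with `a` and `b` then `f(a, gb) = f(a,b) g^s`; (iii) if `g`
commutes with `a` and `gb = bg⁻¹` then `f(a, gb) = f(a,b) g^e` with `e = 0` if `s`
is even and `e = -1` otherwise. -/
theorem haiku_lemma
    (Z : ZhatModel) (F2 : F2Model) (f : F2.F) (r s : Z.R)
    (habel : (QuotientGroup.mk f : F2.F ⧸ (commutator F2.F).topologicalClosure) =
      QuotientGroup.mk (Z.pow F2.x r * Z.pow F2.y s))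
    (G : Type) [Group G] [TopologicalSpace G] [IsProfiniteGroup G] :
    (∀ a b A B : G, Commute a A → Commute a B → Commute b A → Commute b B →
      F2.eval f a b * F2.eval f A B = F2.eval f (a * A) (b * B)) ∧
    (∀ a b gg : G, Commute gg a → Commute gg b →
      F2.eval f a (gg * b) = F2.eval f a b * Z.pow gg s) ∧
    (∀ a b gg : G, Commute gg a → gg * b = b * gg⁻¹ →
      ((∃ s' : Z.R, s = 2 * s') → F2.eval f a (gg * b) = F2.eval f a b) ∧
      (¬(∃ s' : Z.R, s = 2 * s') → F2.eval f a (gg * b) = F2.eval f a b * gg⁻¹)) := by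
  exact ⟨fun a b A B h1 h2 h3 h4 => haiku_part_i F2 f a b A B h1 h2 h3 h4,
    fun a b gg h1 h2 => haiku_part_ii Z F2 f r s habel a b gg h1 h2,
    fun a b gg h1 h2 => haiku_part_iii Z F2 f r s habel a b gg h1 h2⟩
end

section
/- Let g ≥ 2. In Γ_{g,1}: (i) y_i commutes with d and with d′ for i = 2, 3, 4, and y_i² commutes with d and with d′ for every i with 5 ≤ i ≤ g+1; (ii) d′ = y_i d y_i^{-1} = y_i^{-1} d y_i for every i with 5 ≤ i ≤ g+1. -/
/-! # Common setup: profinite groups, Ẑ, free profinite F₂, profinite completions,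
the Grothendieck–Teichmüller group, braid groups and mapping class groups. -/

universe u

/-! ## STATEMENT 11 -/
section BraidAux

variable {G : Type*} [Group G]

private lemma commT {x y : G} (h : x * y = y * x) (z : G) :
    x * (y * z) = y * (x * z) := by
  rw [← mul_assoc, h, mul_assoc]

private lemma braidT {x y : G} (h : x * y * x = y * x * y) (z : G) :
    x * (y * (x * z)) = y * (x * (y * z)) := by
  calc x * (y * (x * z)) = (x * y * x) * z := by group
  _ = (y * x * y) * z := by rw [h]
  _ = y * (x * (y * z)) := by group

private lemma conj_id {x y : G} (h : Commute x y) : x * y * x⁻¹ = y := by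
  rw [h.eq]; group

private lemma conj_id' {x y : G} (h : Commute x y) : x⁻¹ * y * x = y := by
  rw [mul_assoc, ← h.eq, ← mul_assoc, inv_mul_cancel, one_mul]

private lemma braid_package (b1 b2 b3 b4 p4 p5 : G)
    (hp4 : p4 = b1 * b2 * b3) (hp5 : p5 = p4 * b4)
    (h12 : b1 * b2 * b1 = b2 * b1 * b2) (h23 : b2 * b3 * b2 = b3 * b2 * b3)
    (h34 : b3 * b4 * b3 = b4 * b3 * b4)
    (c13 : b1 * b3 = b3 * b1) (c14 : b1 * b4 = b4 * b1) (c24 : b2 * b4 = b4 * b2) :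
    (p4 ^ 4 * b1 = b1 * p4 ^ 4) ∧ (p4 ^ 4 * b2 = b2 * p4 ^ 4) ∧ (p4 ^ 4 * b3 = b3 * p4 ^ 4) ∧
    (p5 ^ 5 * b1 = b1 * p5 ^ 5) ∧ (p5 ^ 5 * b2 = b2 * p5 ^ 5) ∧ (p5 ^ 5 * b3 = b3 * p5 ^ 5) ∧
    (p5 ^ 5 * b4 = b4 * p5 ^ 5) ∧
    (p5 ^ 5 = p4 ^ 4 * (b4 * (b3 * (b2 * (b1 * (b1 * (b2 * (b3 * b4)))))))) := by
  have r12 := braidT h12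
  have r23 := braidT h23
  have r34 := braidT h34
  have q13 := commT c13
  have q14 := commT c14
  have q24 := commT c24
  have hp4T : ∀ x : G, p4 * x = b1 * (b2 * (b3 * x)) := by
    intro x; rw [hp4]; group
  have hp5T : ∀ x : G, p5 * x = p4 * (b4 * x) := by
    intro x; rw [hp5]; group
  have P1 : ∀ x : G, p4 * (b1 * x) = b2 * (p4 * x) := by
    intro x
    rw [hp4T (b1 * x), ← q13 x, r12 (b3 * x), ← hp4T x]
  have P2 : ∀ x : G, p4 * (b2 * x) = b3 * (p4 * x) := by
    intro x
    rw [hp4T (b2 * x), r23 x, q13 (b2 * (b3 * x)), ← hp4T x]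
  have P3 : ∀ x : G, b4 * (p4 * (b4 * x)) = p4 * (b4 * (b3 * x)) := by
    intro x
    rw [hp4T (b4 * x), ← q14 (b2 * (b3 * (b4 * x))), ← q24 (b3 * (b4 * x)), ← r34 x,
      ← hp4T (b4 * (b3 * x))]
  have P5a : ∀ x : G, p5 * (b1 * x) = b2 * (p5 * x) := by
    intro x
    rw [hp5T (b1 * x), ← q14 x, P1 (b4 * x), ← hp5T x]
  have P5b : ∀ x : G, p5 * (b2 * x) = b3 * (p5 * x) := by
    intro x
    rw [hp5T (b2 * x), ← q24 x, P2 (b4 * x), ← hp5T x]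
  have P5c : ∀ x : G, p5 * (b3 * x) = b4 * (p5 * x) := by
    intro x
    rw [hp5T (b3 * x), ← P3 x, ← hp5T x]
  have wrap4 : ∀ x : G, b1 * (p4 * (p4 * x)) = p4 * (p4 * (b3 * x)) := by
    intro x
    rw [hp4T x, P1 (b2 * (b3 * x)), P2 (b3 * x), ← hp4T (p4 * (b3 * x))]
  have wrap5 : ∀ x : G, b1 * (p5 * (p5 * x)) = p5 * (p5 * (b4 * x)) := by
    intro x
    rw [hp5T x, hp4T (b4 * x), P5a (b2 * (b3 * (b4 * x))), P5b (b3 * (b4 * x)),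
      P5c (b4 * x), ← hp4T (b4 * (p5 * (b4 * x))), ← hp5T (p5 * (b4 * x))]
  have cw41 : ∀ x : G, p4 * (p4 * (p4 * (p4 * (b1 * x)))) = b1 * (p4 * (p4 * (p4 * (p4 * x)))) := by
    intro x
    rw [P1 x, P2 (p4 * x), ← wrap4 (p4 * (p4 * x))]
  have cw42 : ∀ x : G, p4 * (p4 * (p4 * (p4 * (b2 * x)))) = b2 * (p4 * (p4 * (p4 * (p4 * x)))) := by
    intro x
    rw [P2 x, ← wrap4 (p4 * x), P1 (p4 * (p4 * (p4 * x)))]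
  have cw43 : ∀ x : G, p4 * (p4 * (p4 * (p4 * (b3 * x)))) = b3 * (p4 * (p4 * (p4 * (p4 * x)))) := by
    intro x
    rw [← wrap4 x, P1 (p4 * (p4 * x)), P2 (p4 * (p4 * (p4 * x)))]
  have cw51 : ∀ x : G, p5 * (p5 * (p5 * (p5 * (p5 * (b1 * x))))) =
      b1 * (p5 * (p5 * (p5 * (p5 * (p5 * x))))) := by
    intro x
    rw [P5a x, P5b (p5 * x), P5c (p5 * (p5 * x)), ← wrap5 (p5 * (p5 * (p5 * x)))]
  have cw52 : ∀ x : G, p5 * (p5 * (p5 * (p5 * (p5 * (b2 * x))))) =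
      b2 * (p5 * (p5 * (p5 * (p5 * (p5 * x))))) := by
    intro x
    rw [P5b x, P5c (p5 * x), ← wrap5 (p5 * (p5 * x)), P5a (p5 * (p5 * (p5 * (p5 * x))))]
  have cw53 : ∀ x : G, p5 * (p5 * (p5 * (p5 * (p5 * (b3 * x))))) =
      b3 * (p5 * (p5 * (p5 * (p5 * (p5 * x))))) := by
    intro x
    rw [P5c x, ← wrap5 (p5 * x), P5a (p5 * (p5 * (p5 * x))), P5b (p5 * (p5 * (p5 * (p5 * x))))]
  have cw54 : ∀ x : G, p5 * (p5 * (p5 * (p5 * (p5 * (b4 * x))))) =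
      b4 * (p5 * (p5 * (p5 * (p5 * (p5 * x))))) := by
    intro x
    rw [← wrap5 x, P5a (p5 * (p5 * x)), P5b (p5 * (p5 * (p5 * x))),
      P5c (p5 * (p5 * (p5 * (p5 * x))))]
  have e2 : ∀ x : G, p5 * (p5 * x) = p4 * (p4 * (b4 * (b3 * x))) := by
    intro x
    rw [hp5T (p5 * x), hp5T x, P3 x]
  have e3 : ∀ x : G, p5 * (p5 * (p5 * x)) = p4 * (p4 * (p4 * (b4 * (b3 * (b2 * x))))) := by
    intro x
    rw [e2 (p5 * x), hp5T x, ← P2 (b4 * x), q24 x, P3 (b2 * x)]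
  have e4 : ∀ x : G, p5 * (p5 * (p5 * (p5 * x))) =
      p4 * (p4 * (p4 * (p4 * (b4 * (b3 * (b2 * (b1 * x))))))) := by
    intro x
    rw [e3 (p5 * x), hp5T x, ← P1 (b4 * x), q14 x, ← P2 (b4 * (b1 * x)), q24 (b1 * x),
      P3 (b2 * (b1 * x))]
  have e5 : ∀ x : G, p5 * (p5 * (p5 * (p5 * (p5 * x)))) =
      p4 * (p4 * (p4 * (p4 * (b4 * (b3 * (b2 * (b1 * (b1 * (b2 * (b3 * (b4 * x))))))))))) := by
    intro x
    rw [e4 (p5 * x), hp5T x, hp4T (b4 * x)]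
  refine ⟨?_, ?_, ?_, ?_, ?_, ?_, ?_, ?_⟩
  · calc p4 ^ 4 * b1 = p4 * (p4 * (p4 * (p4 * (b1 * 1)))) := by simp [pow_succ, mul_assoc]
    _ = b1 * (p4 * (p4 * (p4 * (p4 * 1)))) := cw41 1
    _ = b1 * p4 ^ 4 := by simp [pow_succ, mul_assoc]
  · calc p4 ^ 4 * b2 = p4 * (p4 * (p4 * (p4 * (b2 * 1)))) := by simp [pow_succ, mul_assoc]
    _ = b2 * (p4 * (p4 * (p4 * (p4 * 1)))) := cw42 1
    _ = b2 * p4 ^ 4 := by simp [pow_succ, mul_assoc]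
  · calc p4 ^ 4 * b3 = p4 * (p4 * (p4 * (p4 * (b3 * 1)))) := by simp [pow_succ, mul_assoc]
    _ = b3 * (p4 * (p4 * (p4 * (p4 * 1)))) := cw43 1
    _ = b3 * p4 ^ 4 := by simp [pow_succ, mul_assoc]
  · calc p5 ^ 5 * b1 = p5 * (p5 * (p5 * (p5 * (p5 * (b1 * 1))))) := by simp [pow_succ, mul_assoc]
    _ = b1 * (p5 * (p5 * (p5 * (p5 * (p5 * 1))))) := cw51 1
    _ = b1 * p5 ^ 5 := by simp [pow_succ, mul_assoc]
  · calc p5 ^ 5 * b2 = p5 * (p5 * (p5 * (p5 * (p5 * (b2 * 1))))) := by simp [pow_succ, mul_assoc]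
    _ = b2 * (p5 * (p5 * (p5 * (p5 * (p5 * 1))))) := cw52 1
    _ = b2 * p5 ^ 5 := by simp [pow_succ, mul_assoc]
  · calc p5 ^ 5 * b3 = p5 * (p5 * (p5 * (p5 * (p5 * (b3 * 1))))) := by simp [pow_succ, mul_assoc]
    _ = b3 * (p5 * (p5 * (p5 * (p5 * (p5 * 1))))) := cw53 1
    _ = b3 * p5 ^ 5 := by simp [pow_succ, mul_assoc]
  · calc p5 ^ 5 * b4 = p5 * (p5 * (p5 * (p5 * (p5 * (b4 * 1))))) := by simp [pow_succ, mul_assoc]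
    _ = b4 * (p5 * (p5 * (p5 * (p5 * (p5 * 1))))) := cw54 1
    _ = b4 * p5 ^ 5 := by simp [pow_succ, mul_assoc]
  · calc p5 ^ 5 = p5 * (p5 * (p5 * (p5 * (p5 * 1)))) := by simp [pow_succ, mul_assoc]
    _ = p4 * (p4 * (p4 * (p4 * (b4 * (b3 * (b2 * (b1 * (b1 * (b2 * (b3 * (b4 * 1))))))))))) :=
        e5 1
    _ = p4 ^ 4 * (b4 * (b3 * (b2 * (b1 * (b1 * (b2 * (b3 * b4))))))) := by
        simp [pow_succ, mul_assoc]

private lemma genY5eq (b : ℕ → G) :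
    genY b 5 = b 4 * (b 3 * (b 2 * (b 1 * b 1) * b 2) * b 3) * b 4 := rfl

private lemma main_aux (d : G) (a : ℕ → G) (g : ℕ) (hg : 2 ≤ g)
    (hbraid : ∀ i, 1 ≤ i → i + 1 ≤ 2 * g →
      a i * a (i + 1) * a i = a (i + 1) * a i * a (i + 1))
    (hcomm : ∀ i j, 1 ≤ i → j ≤ 2 * g → i + 2 ≤ j → a i * a j = a j * a i)
    (hdcomm : ∀ j, 1 ≤ j → j ≤ 2 * g → j ≠ 4 → d * a j = a j * d)
    (hB : d * dpA d a = (a 1 * a 2 * a 3) ^ 4) :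
    (∀ i : ℕ, 2 ≤ i → i ≤ 4 →
      Commute (genY a i) d ∧ Commute (genY a i) (dpA d a)) ∧
    (∀ i : ℕ, 5 ≤ i → i ≤ g + 1 →
      Commute ((genY a i) ^ 2) d ∧ Commute ((genY a i) ^ 2) (dpA d a)) ∧
    (∀ i : ℕ, 5 ≤ i → i ≤ g + 1 →
      dpA d a = genY a i * d * (genY a i)⁻¹ ∧
      dpA d a = (genY a i)⁻¹ * d * genY a i) := by
  have r12 := hbraid 1 (by omega) (by omega)
  have r23 := hbraid 2 (by omega) (by omega)
  have r34 := hbraid 3 (by omega) (by omega)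
  have c13 := hcomm 1 3 (by omega) (by omega) (by omega)
  have c14 := hcomm 1 4 (by omega) (by omega) (by omega)
  have c24 := hcomm 2 4 (by omega) (by omega) (by omega)
  obtain ⟨W1, W2, W3, V1, V2, V3, V4, hY⟩ :=
    braid_package (a 1) (a 2) (a 3) (a 4) (a 1 * a 2 * a 3) (a 1 * a 2 * a 3 * a 4)
      rfl rfl r12 r23 r34 c13 c14 c24
  -- basic commutes
  have cd1 : Commute (a 1) d := (hdcomm 1 (by omega) (by omega) (by omega)).symm
  have cd2 : Commute (a 2) d := (hdcomm 2 (by omega) (by omega) (by omega)).symm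
  have cd3 : Commute (a 3) d := (hdcomm 3 (by omega) (by omega) (by omega)).symm
  have cdw4 : Commute d ((a 1 * a 2 * a 3) ^ 4) :=
    ((cd1.symm.mul_right cd2.symm).mul_right cd3.symm).pow_right 4
  have cW1 : Commute ((a 1 * a 2 * a 3) ^ 4) (a 1) := W1
  have cW2 : Commute ((a 1 * a 2 * a 3) ^ 4) (a 2) := W2
  have cW3 : Commute ((a 1 * a 2 * a 3) ^ 4) (a 3) := W3
  have cw1 : Commute (a 1) ((a 1 * a 2 * a 3) ^ 4) := cW1.symm
  have cw2 : Commute (a 2) ((a 1 * a 2 * a 3) ^ 4) := cW2.symm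
  have cw3 : Commute (a 3) ((a 1 * a 2 * a 3) ^ 4) := cW3.symm
  -- y5 commutes with w4
  have cV1 : Commute ((a 1 * a 2 * a 3 * a 4) ^ 5) (a 1) := V1
  have cV2 : Commute ((a 1 * a 2 * a 3 * a 4) ^ 5) (a 2) := V2
  have cV3 : Commute ((a 1 * a 2 * a 3 * a 4) ^ 5) (a 3) := V3
  have hw5c : Commute ((a 1 * a 2 * a 3 * a 4) ^ 5) ((a 1 * a 2 * a 3) ^ 4) :=
    ((cV1.mul_right cV2).mul_right cV3).pow_right 4
  have hy5w5 : genY a 5 = ((a 1 * a 2 * a 3) ^ 4)⁻¹ * (a 1 * a 2 * a 3 * a 4) ^ 5 := by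
    rw [hY, genY5eq]; group
  have cyw4 : Commute (genY a 5) ((a 1 * a 2 * a 3) ^ 4) := by
    rw [hy5w5]
    exact ((Commute.refl _).inv_left.mul_left hw5c)
  -- d' = d⁻¹ w4
  have hdp : dpA d a = d⁻¹ * (a 1 * a 2 * a 3) ^ 4 := by
    rw [← hB]; group
  have key1 : genY a 5 * d * (genY a 5)⁻¹ = d⁻¹ * (a 1 * a 2 * a 3) ^ 4 := by
    rw [← hdp]; rfl
  have key2 : (genY a 5)⁻¹ * d * genY a 5 = d⁻¹ * (a 1 * a 2 * a 3) ^ 4 := by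
    have e1 : genY a 5 * (d⁻¹ * (a 1 * a 2 * a 3) ^ 4) * (genY a 5)⁻¹ = d := by
      calc genY a 5 * (d⁻¹ * (a 1 * a 2 * a 3) ^ 4) * (genY a 5)⁻¹
          = (genY a 5 * d * (genY a 5)⁻¹)⁻¹ *
            (genY a 5 * ((a 1 * a 2 * a 3) ^ 4) * (genY a 5)⁻¹) := by group
        _ = (d⁻¹ * (a 1 * a 2 * a 3) ^ 4)⁻¹ * ((a 1 * a 2 * a 3) ^ 4) := by
            rw [key1, conj_id cyw4]
        _ = ((a 1 * a 2 * a 3) ^ 4)⁻¹ * d * ((a 1 * a 2 * a 3) ^ 4) := by group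
        _ = d := conj_id' cdw4.symm
    calc (genY a 5)⁻¹ * d * genY a 5
        = (genY a 5)⁻¹ * (genY a 5 * (d⁻¹ * (a 1 * a 2 * a 3) ^ 4) * (genY a 5)⁻¹) *
          genY a 5 := by rw [e1]
      _ = d⁻¹ * (a 1 * a 2 * a 3) ^ 4 := by group
  -- the main induction
  have main : ∀ i : ℕ, 5 ≤ i → i ≤ g + 1 →
      genY a i * d * (genY a i)⁻¹ = d⁻¹ * (a 1 * a 2 * a 3) ^ 4 ∧
      (genY a i)⁻¹ * d * genY a i = d⁻¹ * (a 1 * a 2 * a 3) ^ 4 := by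
    intro i hi
    induction i, hi using Nat.le_induction with
    | base => exact fun _ => ⟨key1, key2⟩
    | succ i hi5 IH =>
      intro hle
      obtain ⟨ih1, ih2⟩ := IH (by omega)
      have hstep : genY a (i + 1) = a i * genY a i * a i := by
        obtain ⟨m, rfl⟩ : ∃ m, i = m + 2 := ⟨i - 2, by omega⟩
        rfl
      have hid : Commute (a i) d := (hdcomm i (by omega) (by omega) (by omega)).symm
      have cw : Commute (a i) ((a 1 * a 2 * a 3) ^ 4) := by
        have c1 : Commute (a i) (a 1) := (hcomm 1 i (by omega) (by omega) (by omega)).symm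
        have c2 : Commute (a i) (a 2) := (hcomm 2 i (by omega) (by omega) (by omega)).symm
        have c3 : Commute (a i) (a 3) := (hcomm 3 i (by omega) (by omega) (by omega)).symm
        exact ((c1.mul_right c2).mul_right c3).pow_right 4
      have cdp : Commute (a i) (d⁻¹ * (a 1 * a 2 * a 3) ^ 4) := hid.inv_right.mul_right cw
      constructor
      · calc genY a (i + 1) * d * (genY a (i + 1))⁻¹
            = a i * (genY a i * (a i * d * (a i)⁻¹) * (genY a i)⁻¹) * (a i)⁻¹ := by
              rw [hstep]; group
          _ = a i * (genY a i * d * (genY a i)⁻¹) * (a i)⁻¹ := by rw [conj_id hid]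
          _ = a i * (d⁻¹ * (a 1 * a 2 * a 3) ^ 4) * (a i)⁻¹ := by rw [ih1]
          _ = d⁻¹ * (a 1 * a 2 * a 3) ^ 4 := conj_id cdp
      · calc (genY a (i + 1))⁻¹ * d * genY a (i + 1)
            = (a i)⁻¹ * ((genY a i)⁻¹ * ((a i)⁻¹ * d * a i) * genY a i) * a i := by
              rw [hstep]; group
          _ = (a i)⁻¹ * ((genY a i)⁻¹ * d * genY a i) * a i := by rw [conj_id' hid]
          _ = (a i)⁻¹ * (d⁻¹ * (a 1 * a 2 * a 3) ^ 4) * a i := by rw [ih2]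
          _ = d⁻¹ * (a 1 * a 2 * a 3) ^ 4 := conj_id' cdp
  refine ⟨?_, ?_, ?_⟩
  · intro i h2 h4
    have hcase : i = 2 ∨ i = 3 ∨ i = 4 := by omega
    have do2 : Commute (genY a 2) d := by
      have : genY a 2 = a 1 * a 1 := rfl
      rw [this]; exact cd1.mul_left cd1
    have do3 : Commute (genY a 3) d := by
      have : genY a 3 = a 2 * (a 1 * a 1) * a 2 := rfl
      rw [this]; exact (cd2.mul_left (cd1.mul_left cd1)).mul_left cd2
    have do4 : Commute (genY a 4) d := by
      have : genY a 4 = a 3 * (a 2 * (a 1 * a 1) * a 2) * a 3 := rfl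
      rw [this]
      exact (cd3.mul_left ((cd2.mul_left (cd1.mul_left cd1)).mul_left cd2)).mul_left cd3
    have wo2 : Commute (genY a 2) ((a 1 * a 2 * a 3) ^ 4) := by
      have : genY a 2 = a 1 * a 1 := rfl
      rw [this]; exact cw1.mul_left cw1
    have wo3 : Commute (genY a 3) ((a 1 * a 2 * a 3) ^ 4) := by
      have : genY a 3 = a 2 * (a 1 * a 1) * a 2 := rfl
      rw [this]; exact (cw2.mul_left (cw1.mul_left cw1)).mul_left cw2
    have wo4 : Commute (genY a 4) ((a 1 * a 2 * a 3) ^ 4) := by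
      have : genY a 4 = a 3 * (a 2 * (a 1 * a 1) * a 2) * a 3 := rfl
      rw [this]
      exact (cw3.mul_left ((cw2.mul_left (cw1.mul_left cw1)).mul_left cw2)).mul_left cw3
    rcases hcase with rfl | rfl | rfl
    · exact ⟨do2, by rw [hdp]; exact do2.inv_right.mul_right wo2⟩
    · exact ⟨do3, by rw [hdp]; exact do3.inv_right.mul_right wo3⟩
    · exact ⟨do4, by rw [hdp]; exact do4.inv_right.mul_right wo4⟩
  · intro i h5 hle
    obtain ⟨m1, m2⟩ := main i h5 hle
    have e : genY a i * d * (genY a i)⁻¹ = (genY a i)⁻¹ * d * genY a i := m1.trans m2.symm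
    have cyd2 : Commute ((genY a i) ^ 2) d := by
      show (genY a i) ^ 2 * d = d * (genY a i) ^ 2
      calc (genY a i) ^ 2 * d = genY a i * (genY a i * d * (genY a i)⁻¹) * genY a i := by
            rw [pow_two]; group
        _ = genY a i * ((genY a i)⁻¹ * d * genY a i) * genY a i := by rw [e]
        _ = d * (genY a i) ^ 2 := by rw [pow_two]; group
    refine ⟨cyd2, ?_⟩
    have hdpy : dpA d a = genY a i * d * (genY a i)⁻¹ := hdp.trans m1.symm
    rw [hdpy]
    have cyy : Commute ((genY a i) ^ 2) (genY a i) := (Commute.refl (genY a i)).pow_left 2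
    exact (cyy.mul_right cyd2).mul_right cyy.inv_right
  · intro i h5 hle
    obtain ⟨m1, m2⟩ := main i h5 hle
    exact ⟨hdp.trans m1.symm, hdp.trans m2.symm⟩

end BraidAux

section GammaRels

private lemma gamma_rel_one {g : ℕ} {r : FreeGroup (Fin (2 * g + 1))} (h : r ∈ mcgRels g) :
    PresentedGroup.mk (mcgRels g) r = 1 :=
  (QuotientGroup.eq_one_iff r).mpr (Subgroup.subset_normalClosure h)

private lemma mk_aF (g i : ℕ) : PresentedGroup.mk (mcgRels g) (aF g i) = aM g i := by
  unfold aF aM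
  split_ifs with h
  · rfl
  · exact map_one _

private lemma mk_dF (g : ℕ) : PresentedGroup.mk (mcgRels g) (dF g) = dM g := rfl

private lemma rel_braid (g i : ℕ) (h1 : 1 ≤ i) (h2 : i + 1 ≤ 2 * g) :
    aM g i * aM g (i + 1) * aM g i = aM g (i + 1) * aM g i * aM g (i + 1) := by
  have hm : (aF g i * aF g (i + 1) * aF g i *
      (aF g (i + 1) * aF g i * aF g (i + 1))⁻¹) ∈ mcgRels g :=
    Or.inl ⟨i, h1, h2, rfl⟩
  have h := gamma_rel_one hm
  simp only [map_mul, map_inv, mk_aF] at h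
  exact mul_inv_eq_one.mp h

private lemma rel_comm (g i j : ℕ) (h1 : 1 ≤ i) (h2 : j ≤ 2 * g) (h3 : i + 2 ≤ j) :
    aM g i * aM g j = aM g j * aM g i := by
  have hm : (aF g i * aF g j * (aF g j * aF g i)⁻¹) ∈ mcgRels g :=
    Or.inr (Or.inl ⟨i, j, h1, h2, h3, rfl⟩)
  have h := gamma_rel_one hm
  simp only [map_mul, map_inv, mk_aF] at h
  exact mul_inv_eq_one.mp h

private lemma rel_dcomm (g j : ℕ) (h1 : 1 ≤ j) (h2 : j ≤ 2 * g) (h3 : j ≠ 4) :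
    dM g * aM g j = aM g j * dM g := by
  have hm : (dF g * aF g j * (aF g j * dF g)⁻¹) ∈ mcgRels g :=
    Or.inr (Or.inr (Or.inr (Or.inl ⟨j, h1, h2, h3, rfl⟩)))
  have h := gamma_rel_one hm
  simp only [map_mul, map_inv, mk_aF, mk_dF] at h
  exact mul_inv_eq_one.mp h

private lemma rel_B (g : ℕ) :
    dM g * dpA (dM g) (aM g) = (aM g 1 * aM g 2 * aM g 3) ^ 4 := by
  have hm : (dF g * dpA (dF g) (aF g) * ((aF g 1 * aF g 2 * aF g 3) ^ 4)⁻¹) ∈ mcgRels g :=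
    Or.inr (Or.inr (Or.inr (Or.inr (Or.inl rfl))))
  have h := gamma_rel_one hm
  simp only [dpA, genY5eq, map_mul, map_inv, map_pow, mk_aF, mk_dF] at h
  simp only [dpA, genY5eq]
  exact mul_inv_eq_one.mp h

end GammaRels


/-- Lemma 5.2: in `Γ_{g,1}`, (i) `y_i` commutes with `d` and `d′` for `i = 2, 3, 4`
and `y_i²` commutes with `d` and `d′` for `5 ≤ i ≤ g+1`; (ii) `d′ = y_i d y_i⁻¹ =
y_i⁻¹ d y_i` for `5 ≤ i ≤ g+1`. -/
theorem y_commutation_with_d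
    (g : ℕ) (hg : 2 ≤ g) :
    (∀ i : ℕ, 2 ≤ i → i ≤ 4 →
      Commute (genY (aM g) i) (dM g) ∧
      Commute (genY (aM g) i) (dpA (dM g) (aM g))) ∧
    (∀ i : ℕ, 5 ≤ i → i ≤ g + 1 →
      Commute ((genY (aM g) i) ^ 2) (dM g) ∧
      Commute ((genY (aM g) i) ^ 2) (dpA (dM g) (aM g))) ∧
    (∀ i : ℕ, 5 ≤ i → i ≤ g + 1 →
      dpA (dM g) (aM g) = genY (aM g) i * dM g * (genY (aM g) i)⁻¹ ∧
      dpA (dM g) (aM g) = (genY (aM g) i)⁻¹ * dM g * genY (aM g) i) := by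
  exact main_aux (dM g) (aM g) g hg (fun i h1 h2 => rel_braid g i h1 h2)
    (fun i j h1 h2 h3 => rel_comm g i j h1 h2 h3)
    (fun j h1 h2 h3 => rel_dcomm g j h1 h2 h3) (rel_B g)
end
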